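/- Let S and T be multisets of m permutations of {1,…,n} with Σ_{σ∈S} P_σ = Σ_{τ∈T} P_τ. Let τ₀ ∈ T and suppose there exists σ₀ ∈ S that differs from τ₀ in exactly k positions, where k + 1 ≤ m. Then there exists a multiset S′ of m permutations of {1,…,n} with Σ_{σ∈S′} P_σ = Σ_{σ∈S} P_σ, such that τ₀ ∈ S′ and the multiset intersection of S and S′ has cardinality at least m − (k+1). -/

import Mathlib

/-- The permutation matrix of `π`: entry `(i,j)` is `1` if `π i = j`, else `0`. -/
def permMat (n : ℕ) (π : Equiv.Perm (Fin n)) : Matrix (Fin n) (Fin n) ℕ :=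
  Matrix.of fun i j => if π i = j then 1 else 0

lemma msum_entry {n : ℕ} (M : Multiset (Equiv.Perm (Fin n))) (i j : Fin n) :
    (M.map (permMat n)).sum i j = (M.map fun σ => permMat n σ i j).sum := by
  induction M using Multiset.induction_on with
  | empty => simp [Matrix.zero_apply]
  | cons a s ih => simp [Matrix.add_apply, ih]

/-- Every ℕ-matrix with all row and column sums equal to `r` is a sum of `r`
permutation matrices. -/
lemma exists_decomp {n : ℕ} : ∀ (r : ℕ) (N : Matrix (Fin n) (Fin n) ℕ),
    (∀ i, ∑ j, N i j = r) → (∀ j, ∑ i, N i j = r) →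
    ∃ D : Multiset (Equiv.Perm (Fin n)), Multiset.card D = r ∧
      (D.map (permMat n)).sum = N := by
  intro r
  induction r with
  | zero =>
    intro N hrow _
    refine ⟨0, rfl, ?_⟩
    ext i j
    have : N i j = 0 := by
      have := hrow i
      have h2 : ∀ j' ∈ Finset.univ, N i j' = 0 := by
        rw [← Finset.sum_eq_zero_iff_of_nonneg (fun _ _ => Nat.zero_le _)]
        exact this
      exact h2 j (Finset.mem_univ j)
    simp [this, Matrix.zero_apply]
  | succ r ih =>
    intro N hrow hcol
    classical
    -- Hall's theorem to find a permutation in the support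
    set t : Fin n → Finset (Fin n) := fun i => Finset.univ.filter fun j => 0 < N i j with ht
    have hall : ∀ s : Finset (Fin n), s.card ≤ (s.biUnion t).card := by
      intro s
      have key : s.card * (r + 1) ≤ (s.biUnion t).card * (r + 1) := by
        calc s.card * (r + 1) = ∑ i ∈ s, ∑ j, N i j := by
              rw [Finset.sum_congr rfl fun i _ => hrow i]; simp [mul_comm]
          _ = ∑ i ∈ s, ∑ j ∈ s.biUnion t, N i j := by
              refine Finset.sum_congr rfl fun i hi => ?_
              refine (Finset.sum_subset (Finset.subset_univ _) fun j _ hj => ?_).symm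
              by_contra h
              exact hj (Finset.mem_biUnion.2 ⟨i, hi, by simp [ht, Nat.pos_of_ne_zero h]⟩)
          _ = ∑ j ∈ s.biUnion t, ∑ i ∈ s, N i j := Finset.sum_comm
          _ ≤ ∑ j ∈ s.biUnion t, ∑ i, N i j :=
              Finset.sum_le_sum fun j _ =>
                Finset.sum_le_sum_of_subset (Finset.subset_univ s)
          _ = (s.biUnion t).card * (r + 1) := by
              rw [Finset.sum_congr rfl fun j _ => hcol j]; simp [mul_comm]
      exact Nat.le_of_mul_le_mul_right key (Nat.succ_pos r)
    obtain ⟨f, hfinj, hf⟩ := (Finset.all_card_le_biUnion_card_iff_exists_injective t).1 hall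
    let π : Equiv.Perm (Fin n) := Equiv.ofBijective f (Finite.injective_iff_bijective.1 hfinj)
    have hπ : ∀ i, 0 < N i (π i) := by
      intro i
      have := hf i
      simp only [ht, Finset.mem_filter] at this
      exact this.2
    have hle : ∀ i j, permMat n π i j ≤ N i j := by
      intro i j
      by_cases h : π i = j
      · subst h; simp [permMat]; exact hπ i
      · simp [permMat, h]
    set N' : Matrix (Fin n) (Fin n) ℕ := Matrix.of fun i j => N i j - permMat n π i j with hN'
    have hrowP : ∀ i, ∑ j, permMat n π i j = 1 := by
      intro i; simp [permMat, Finset.sum_ite_eq' Finset.univ (π i)]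
    have hcolP : ∀ j, ∑ i, permMat n π i j = 1 := by
      intro j
      have h1 : ∀ i, permMat n π i j = if i = π⁻¹ j then 1 else 0 := fun i => by
        simp [permMat, Equiv.apply_eq_iff_eq_symm_apply, Equiv.Perm.inv_def]
      rw [Finset.sum_congr rfl fun i _ => h1 i]
      simp [Finset.sum_ite_eq' Finset.univ (π⁻¹ j)]
    obtain ⟨D, hDcard, hDsum⟩ := ih N'
      (fun i => by
        simp only [hN', Matrix.of_apply]
        rw [Finset.sum_tsub_distrib Finset.univ (f := fun j => N i j) (g := fun j => permMat n π i j) (fun j _ => hle i j)]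
        simp [hrow i, hrowP i])
      (fun j => by
        simp only [hN', Matrix.of_apply]
        rw [Finset.sum_tsub_distrib Finset.univ (f := fun i => N i j) (g := fun i => permMat n π i j) (fun i _ => hle i j)]
        simp [hcol j, hcolP j])
    refine ⟨π ::ₘ D, by simp [hDcard], ?_⟩
    rw [Multiset.map_cons, Multiset.sum_cons, hDsum]
    ext i j
    simp only [Matrix.add_apply, hN', Matrix.of_apply]
    have := hle i j
    omega

lemma permMat_row {n : ℕ} (σ : Equiv.Perm (Fin n)) (i : Fin n) :
    ∑ j, permMat n σ i j = 1 := by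
  simp [permMat, Finset.sum_ite_eq' Finset.univ (σ i)]

lemma permMat_col {n : ℕ} (σ : Equiv.Perm (Fin n)) (j : Fin n) :
    ∑ i, permMat n σ i j = 1 := by
  have h1 : ∀ i, permMat n σ i j = if i = σ⁻¹ j then 1 else 0 := fun i => by
    simp [permMat, Equiv.apply_eq_iff_eq_symm_apply, Equiv.Perm.inv_def]
  rw [Finset.sum_congr rfl fun i _ => h1 i]
  simp [Finset.sum_ite_eq' Finset.univ (σ⁻¹ j)]

/-- Let `S` and `T` be multisets of `m` permutations with the same sum of permutation
matrices, let `τ₀ ∈ T`, and suppose some `σ₀ ∈ S` differs from `τ₀` in exactly `k`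
positions with `k + 1 ≤ m`.  Then there is a multiset `S'` of `m` permutations with the
same sum of permutation matrices as `S`, containing `τ₀`, and sharing at least
`m - (k + 1)` elements (with multiplicity) with `S`. -/
theorem exists_move_matching_one_row
    (n m k : ℕ) (S T : Multiset (Equiv.Perm (Fin n)))
    (hS : Multiset.card S = m) (hT : Multiset.card T = m)
    (hsum : (S.map (permMat n)).sum = (T.map (permMat n)).sum)
    (τ₀ : Equiv.Perm (Fin n)) (hτ₀ : τ₀ ∈ T)
    (σ₀ : Equiv.Perm (Fin n)) (hσ₀ : σ₀ ∈ S)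
    (hk : (Finset.univ.filter fun i => σ₀ i ≠ τ₀ i).card = k)
    (hkm : k + 1 ≤ m) :
    ∃ S' : Multiset (Equiv.Perm (Fin n)),
      Multiset.card S' = m ∧
      (S'.map (permMat n)).sum = (S.map (permMat n)).sum ∧
      τ₀ ∈ S' ∧
      m - (k + 1) ≤ Multiset.card (S ∩ S') := by
  classical
  -- in every row `i`, some `σ ∈ S` agrees with `τ₀`
  have hentry : ∀ i : Fin n, ∃ σ ∈ S, σ i = τ₀ i := by
    intro i
    by_contra hcon
    push_neg at hcon
    have h1 : (S.map (permMat n)).sum i (τ₀ i) = 0 := by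
      rw [msum_entry]
      apply Multiset.sum_eq_zero
      intro x hx
      obtain ⟨σ, hσS, rfl⟩ := Multiset.mem_map.1 hx
      simp [permMat, hcon σ hσS]
    have h2 : 1 ≤ (T.map (permMat n)).sum i (τ₀ i) := by
      rw [msum_entry]
      have hmem : (1 : ℕ) ∈ T.map fun σ => permMat n σ i (τ₀ i) := by
        refine Multiset.mem_map.2 ⟨τ₀, hτ₀, ?_⟩
        simp [permMat]
      exact Multiset.single_le_sum (fun x _ => Nat.zero_le x) 1 hmem
    rw [hsum] at h1
    omega
  choose g hg1 hg2 using hentry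
  set bad : Finset (Fin n) := Finset.univ.filter fun i => σ₀ i ≠ τ₀ i with hbad
  set R : Finset (Equiv.Perm (Fin n)) := insert σ₀ (bad.image g) with hR
  have hRS : R.val ≤ S := by
    refine (Multiset.le_iff_subset R.nodup).2 fun x hx => ?_
    rcases Finset.mem_insert.1 (show x ∈ R from hx) with h | h
    · exact h ▸ hσ₀
    · obtain ⟨i, _, rfl⟩ := Finset.mem_image.1 h
      exact hg1 i
  have hRcard : R.card ≤ k + 1 := by
    calc R.card ≤ (bad.image g).card + 1 := Finset.card_insert_le _ _
      _ ≤ bad.card + 1 := by exact Nat.add_le_add_right (Finset.card_image_le) 1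
      _ = k + 1 := by rw [hbad, hk]
  have hR1 : 1 ≤ R.card := Finset.card_pos.2 ⟨σ₀, Finset.mem_insert_self _ _⟩
  set A : Matrix (Fin n) (Fin n) ℕ := ∑ σ ∈ R, permMat n σ with hA
  have hAval : (R.val.map (permMat n)).sum = A := rfl
  have hcover : ∀ i j, permMat n τ₀ i j ≤ A i j := by
    intro i j
    by_cases h : τ₀ i = j
    · subst h
      have hex : ∃ σ ∈ R, σ i = τ₀ i := by
        by_cases h' : σ₀ i = τ₀ i
        · exact ⟨σ₀, Finset.mem_insert_self _ _, h'⟩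
        · exact ⟨g i, Finset.mem_insert_of_mem
            (Finset.mem_image_of_mem g (by simp [hbad, h'])), hg2 i⟩
      obtain ⟨σ, hσR, hσ⟩ := hex
      have : (1 : ℕ) ≤ ∑ σ ∈ R, permMat n σ i (τ₀ i) := by
        refine Finset.single_le_sum (f := fun σ => permMat n σ i (τ₀ i))
          (fun _ _ => Nat.zero_le _) hσR |>.trans_eq' ?_
        simp [permMat, hσ]
      simpa [hA, Matrix.sum_apply, permMat] using this
    · simp [permMat, h]
  have hArow : ∀ i, ∑ j, A i j = R.card := by
    intro i
    simp only [hA, Matrix.sum_apply]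
    rw [Finset.sum_comm]
    simp [permMat_row]
  have hAcol : ∀ j, ∑ i, A i j = R.card := by
    intro j
    simp only [hA, Matrix.sum_apply]
    rw [Finset.sum_comm]
    simp [permMat_col]
  set N : Matrix (Fin n) (Fin n) ℕ := Matrix.of fun i j => A i j - permMat n τ₀ i j with hN
  obtain ⟨D, hDcard, hDsum⟩ := exists_decomp (R.card - 1) N
    (fun i => by
      simp only [hN, Matrix.of_apply]
      rw [Finset.sum_tsub_distrib Finset.univ (f := fun j => A i j)
        (g := fun j => permMat n τ₀ i j) (fun j _ => hcover i j)]
      rw [hArow i, permMat_row])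
    (fun j => by
      simp only [hN, Matrix.of_apply]
      rw [Finset.sum_tsub_distrib Finset.univ (f := fun i => A i j)
        (g := fun i => permMat n τ₀ i j) (fun i _ => hcover i j)]
      rw [hAcol j, permMat_col])
  refine ⟨(S - R.val) + (τ₀ ::ₘ D), ?_, ?_, ?_, ?_⟩
  · have hc : Multiset.card (S - R.val) = m - R.card := by
      rw [Multiset.card_sub hRS, hS]
      rfl
    simp only [Multiset.card_add, hc, Multiset.card_cons, hDcard]
    omega
  · have hsplit : S = (S - R.val) + R.val := (tsub_add_cancel_of_le hRS).symm
    conv_rhs => rw [hsplit]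
    rw [Multiset.map_add, Multiset.sum_add, Multiset.map_add, Multiset.sum_add]
    congr 1
    rw [Multiset.map_cons, Multiset.sum_cons, hDsum, hAval]
    ext i j
    simp only [Matrix.add_apply, hN, Matrix.of_apply]
    have := hcover i j
    omega
  · exact Multiset.mem_add.2 (Or.inr (Multiset.mem_cons_self _ _))
  · have hle : S - R.val ≤ S ∩ ((S - R.val) + (τ₀ ::ₘ D)) :=
      Multiset.le_inter (Multiset.sub_le_self _ _) (Multiset.le_add_right _ _)
    have := Multiset.card_le_card hle
    rw [Multiset.card_sub hRS, hS] at this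
    have hrv : Multiset.card R.val = R.card := rfl
    rw [hrv] at this
    omega
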